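/- Let n ≥ 1, let U ⊆ ℝ^{n+1} be open, let h : U → Sym(n+1, ℝ) be C², and suppose g(x) := m + h(x) is invertible for every x ∈ U, where m = diag(−1, 1, …, 1). With g^{μν} the entries of g^{−1} and repeated indices μ, ν, λ, δ, α, β ∈ {0, …, n} summed, define Γ_{μνδ} := ∂_μ h_{δν} + ∂_ν h_{μδ} − ∂_δ h_{μν}, Γ^λ_{μν} := (1/2) g^{λδ} Γ_{μνδ}, Γ_μ := g^{αβ}( ∂_α h_{μβ} − (1/2) ∂_μ h_{αβ} ), R_{μν} := ∂_λ Γ^λ_{μν} − ∂_μ Γ^λ_{λν} + Γ^λ_{μν} Γ^δ_{λδ} − Γ^δ_{μλ} Γ^λ_{νδ}, E_{μν} := Γ^λ_{μν} Γ^δ_{λδ} − Γ^δ_{μλ} Γ^λ_{νδ} + (1/2)(∂_λ g^{λδ}) Γ_{μνδ} − (1/2)(∂_μ g^{λδ}) Γ_{λνδ}, D_{μν} := −(∂_μ g^{λδ})( ∂_λ h_{νδ} − (1/2) ∂_ν h_{λδ} ), and F_{μν} := 2E_{μν} + D_{μν} + D_{νμ}. Then on U, for all μ, ν ∈ {0,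 …, n}: R_{μν} = −(1/2) g^{λδ} ∂_λ∂_δ h_{μν} + (1/2) ∂_μ Γ_ν + (1/2) ∂_ν Γ_μ + (1/2) F_{μν}. -/

import Mathlib

noncomputable section

/-- Points of `ℝ^{1+n}`. -/
abbrev Pt (n : ℕ) := Fin (n + 1) → ℝ

/-- Partial derivative `∂_μ` of a real-valued function on `ℝ^{1+n}`. -/
def pd {n : ℕ} (μ : Fin (n + 1)) (f : Pt n → ℝ) (x : Pt n) : ℝ :=
  fderiv ℝ f x (Pi.single μ 1)

/-- The Minkowski matrix `m = diag(−1, 1, …, 1)`. -/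
def mink (n : ℕ) : Fin (n + 1) → Fin (n + 1) → ℝ :=
  fun μ ν => if μ = ν then (if μ = 0 then -1 else 1) else 0

/-- The perturbed metric `g = m + h` as a matrix. -/
def gmet {n : ℕ} (h : Pt n → Fin (n + 1) → Fin (n + 1) → ℝ) (x : Pt n) :
    Matrix (Fin (n + 1)) (Fin (n + 1)) ℝ :=
  Matrix.of fun μ ν => mink n μ ν + h x μ ν

/-- Components `g^{μν}` of the inverse metric. -/
def ginv {n : ℕ} (h : Pt n → Fin (n + 1) → Fin (n + 1) → ℝ) (x : Pt n)
    (μ ν : Fin (n + 1)) : ℝ :=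
  (gmet h x)⁻¹ μ ν

/-- `Γ_{μνδ} = ∂_μ h_{δν} + ∂_ν h_{μδ} − ∂_δ h_{μν}`. -/
def ΓL {n : ℕ} (h : Pt n → Fin (n + 1) → Fin (n + 1) → ℝ)
    (μ ν δ : Fin (n + 1)) (x : Pt n) : ℝ :=
  pd μ (fun y => h y δ ν) x + pd ν (fun y => h y μ δ) x - pd δ (fun y => h y μ ν) x

/-- `Γ^λ_{μν} = ½ g^{λδ} Γ_{μνδ}`. -/
def ΓU {n : ℕ} (h : Pt n → Fin (n + 1) → Fin (n + 1) → ℝ)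
    (l μ ν : Fin (n + 1)) (x : Pt n) : ℝ :=
  (1 / 2) * ∑ δ, ginv h x l δ * ΓL h μ ν δ x

/-- The harmonic gauge quantity `Γ_μ = g^{αβ}(∂_α h_{μβ} − ½ ∂_μ h_{αβ})`. -/
def Γone {n : ℕ} (h : Pt n → Fin (n + 1) → Fin (n + 1) → ℝ)
    (μ : Fin (n + 1)) (x : Pt n) : ℝ :=
  ∑ α, ∑ β, ginv h x α β *
    (pd α (fun y => h y μ β) x - (1 / 2) * pd μ (fun y => h y α β) x)

/-- The Ricci curvature
`R_{μν} = ∂_λ Γ^λ_{μν} − ∂_μ Γ^λ_{λν} + Γ^λ_{μν} Γ^δ_{λδ} − Γ^δ_{μλ} Γ^λ_{νδ}`. -/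
def Ric {n : ℕ} (h : Pt n → Fin (n + 1) → Fin (n + 1) → ℝ)
    (μ ν : Fin (n + 1)) (x : Pt n) : ℝ :=
  (∑ l, pd l (ΓU h l μ ν) x) - (∑ l, pd μ (ΓU h l l ν) x)
    + (∑ l, ∑ δ, ΓU h l μ ν x * ΓU h δ l δ x)
    - (∑ δ, ∑ l, ΓU h δ μ l x * ΓU h l ν δ x)

/-- `E_{μν} = Γ^λ_{μν}Γ^δ_{λδ} − Γ^δ_{μλ}Γ^λ_{νδ} + ½(∂_λ g^{λδ})Γ_{μνδ} − ½(∂_μ g^{λδ})Γ_{λνδ}`. -/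
def Emat {n : ℕ} (h : Pt n → Fin (n + 1) → Fin (n + 1) → ℝ)
    (μ ν : Fin (n + 1)) (x : Pt n) : ℝ :=
  (∑ l, ∑ δ, ΓU h l μ ν x * ΓU h δ l δ x)
    - (∑ δ, ∑ l, ΓU h δ μ l x * ΓU h l ν δ x)
    + (1 / 2) * ∑ l, ∑ δ, pd l (fun y => ginv h y l δ) x * ΓL h μ ν δ x
    - (1 / 2) * ∑ l, ∑ δ, pd μ (fun y => ginv h y l δ) x * ΓL h l ν δ x

/-- `D_{μν} = −(∂_μ g^{λδ})(∂_λ h_{νδ} − ½ ∂_ν h_{λδ})`. -/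
def Dmat {n : ℕ} (h : Pt n → Fin (n + 1) → Fin (n + 1) → ℝ)
    (μ ν : Fin (n + 1)) (x : Pt n) : ℝ :=
  -(∑ l, ∑ δ, pd μ (fun y => ginv h y l δ) x *
      (pd l (fun y => h y ν δ) x - (1 / 2) * pd ν (fun y => h y l δ) x))

/-- `F_{μν} = 2E_{μν} + D_{μν} + D_{νμ}`. -/
def Fmat {n : ℕ} (h : Pt n → Fin (n + 1) → Fin (n + 1) → ℝ)
    (μ ν : Fin (n + 1)) (x : Pt n) : ℝ :=
  2 * Emat h μ ν x + Dmat h μ ν x + Dmat h ν μ x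

/-! ### Auxiliary lemmas -/

section Aux

variable {n : ℕ} {x : Pt n} {f g : Pt n → ℝ}

theorem pd_add' (μ : Fin (n+1)) (hf : DifferentiableAt ℝ f x) (hg : DifferentiableAt ℝ g x) :
    pd μ (fun y => f y + g y) x = pd μ f x + pd μ g x := by
  simp only [pd, fderiv_fun_add hf hg, ContinuousLinearMap.add_apply]

theorem pd_sub' (μ : Fin (n+1)) (hf : DifferentiableAt ℝ f x) (hg : DifferentiableAt ℝ g x) :
    pd μ (fun y => f y - g y) x = pd μ f x - pd μ g x := by
  simp only [pd, fderiv_fun_sub hf hg, ContinuousLinearMap.sub_apply]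

theorem pd_const_mul' (μ : Fin (n+1)) (c : ℝ) (hf : DifferentiableAt ℝ f x) :
    pd μ (fun y => c * f y) x = c * pd μ f x := by
  simp only [pd, fderiv_const_mul hf c, ContinuousLinearMap.smul_apply, smul_eq_mul]

theorem pd_mul' (μ : Fin (n+1)) (hf : DifferentiableAt ℝ f x) (hg : DifferentiableAt ℝ g x) :
    pd μ (fun y => f y * g y) x = pd μ f x * g x + f x * pd μ g x := by
  simp only [pd, fderiv_fun_mul hf hg, ContinuousLinearMap.add_apply, ContinuousLinearMap.smul_apply,
    smul_eq_mul]
  ring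

theorem pd_sum' {ι : Type*} (s : Finset ι) (μ : Fin (n+1)) {F : ι → Pt n → ℝ}
    (hF : ∀ i ∈ s, DifferentiableAt ℝ (F i) x) :
    pd μ (fun y => ∑ i ∈ s, F i y) x = ∑ i ∈ s, pd μ (F i) x := by
  simp only [pd, fderiv_fun_sum hF, ContinuousLinearMap.sum_apply]

theorem pd_congr_nhds (μ : Fin (n+1)) (hfg : f =ᶠ[nhds x] g) :
    pd μ f x = pd μ g x := by
  simp only [pd, hfg.fderiv_eq]

theorem pd_diff (μ : Fin (n+1)) (hf : ContDiffAt ℝ 2 f x) :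
    DifferentiableAt ℝ (fun y => pd μ f y) x := by
  have h1 : ContDiffAt ℝ 1 (fderiv ℝ f) x := hf.fderiv_right (by norm_num)
  exact (h1.differentiableAt one_ne_zero).clm_apply (differentiableAt_const _)

theorem pd_pd_eq (μ ν : Fin (n+1)) (hf : ContDiffAt ℝ 2 f x) :
    pd μ (fun y => pd ν f y) x
      = fderiv ℝ (fderiv ℝ f) x (Pi.single μ 1) (Pi.single ν 1) := by
  have h1 : DifferentiableAt ℝ (fderiv ℝ f) x :=
    (hf.fderiv_right (m := 1) (by norm_num)).differentiableAt one_ne_zero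
  have e : pd μ (fun y => pd ν f y) x
      = fderiv ℝ (fun y => (fderiv ℝ f y) (Pi.single ν 1)) x (Pi.single μ 1) := rfl
  rw [e, fderiv_clm_apply h1 (differentiableAt_const _)]
  simp

theorem pd_comm (μ ν : Fin (n+1)) (hf : ContDiffAt ℝ 2 f x) :
    pd μ (fun y => pd ν f y) x = pd ν (fun y => pd μ f y) x := by
  rw [pd_pd_eq μ ν hf, pd_pd_eq ν μ hf]
  exact (hf.isSymmSndFDerivAt (by simp)) _ _

theorem diff_det {M : Pt n → Matrix (Fin (n+1)) (Fin (n+1)) ℝ}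
    (hM : ∀ a b, DifferentiableAt ℝ (fun y => M y a b) x) :
    DifferentiableAt ℝ (fun y => (M y).det) x := by
  simp only [Matrix.det_apply]
  apply DifferentiableAt.fun_sum
  intro σ _
  simp only [Units.smul_def, zsmul_eq_mul]
  exact (differentiableAt_const _).mul
    ((HasFDerivAt.finset_prod (fun i _ => (hM (σ i) i).hasFDerivAt)).differentiableAt)

theorem ginv_diff {h : Pt n → Fin (n + 1) → Fin (n + 1) → ℝ}
    (hent : ∀ a b, DifferentiableAt ℝ (fun y => h y a b) x)
    (hx : IsUnit (gmet h x)) (a b : Fin (n+1)) :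
    DifferentiableAt ℝ (fun y => ginv h y a b) x := by
  have hgm : ∀ c d, DifferentiableAt ℝ (fun y => gmet h y c d) x := fun c d =>
    (differentiableAt_const _).add (hent c d)
  have hdet0 : (gmet h x).det ≠ 0 :=
    ((Matrix.isUnit_iff_isUnit_det _).mp hx).ne_zero
  have e : (fun y => ginv h y a b)
      = fun y => ((gmet h y).det)⁻¹ * ((gmet h y).updateRow b (Pi.single a 1)).det := by
    funext y
    rw [ginv, Matrix.inv_def, Matrix.smul_apply, Ring.inverse_eq_inv', smul_eq_mul,
      Matrix.adjugate_apply]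
  rw [e]
  apply DifferentiableAt.mul
  · exact (diff_det hgm).inv hdet0
  · apply diff_det
    intro c d
    by_cases hc : c = b
    · simp [hc, Matrix.updateRow_apply]
    · simpa [hc, Matrix.updateRow_apply] using hgm c d

open Matrix in
theorem ginv_symm {h : Pt n → Fin (n + 1) → Fin (n + 1) → ℝ}
    (hs : ∀ a b, h x a b = h x b a) (a b : Fin (n+1)) :
    ginv h x a b = ginv h x b a := by
  have ht : (gmet h x)ᵀ = gmet h x := by
    ext c d
    simp only [Matrix.transpose_apply, gmet, Matrix.of_apply, hs d c]
    congr 1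
    unfold mink
    rcases eq_or_ne c d with rfl | hcd
    · rfl
    · simp [hcd, hcd.symm]
  have h2 := Matrix.transpose_nonsing_inv (gmet h x)
  rw [ht] at h2
  calc ginv h x a b = ((gmet h x)⁻¹)ᵀ b a := rfl
  _ = (gmet h x)⁻¹ b a := by rw [h2]
  _ = ginv h x b a := rfl

theorem split_sum {F G : Fin (n+1) → Fin (n+1) → ℝ} (c : ℝ) :
    ∑ l, c * ∑ δ, (F l δ + G l δ)
      = c * (∑ l, ∑ δ, F l δ) + c * (∑ l, ∑ δ, G l δ) := by
  simp only [Finset.sum_add_distrib, mul_add, ← Finset.mul_sum]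

end Aux

theorem stmt19 (n : ℕ) (hn : 1 ≤ n) (U : Set (Pt n)) (hU : IsOpen U)
    (h : Pt n → Fin (n + 1) → Fin (n + 1) → ℝ)
    (hC2 : ContDiffOn ℝ 2 h U)
    (hsymm : ∀ x ∈ U, ∀ μ ν, h x μ ν = h x ν μ)
    (hinv : ∀ x ∈ U, IsUnit (gmet h x)) :
    ∀ x ∈ U, ∀ μ ν : Fin (n + 1),
      Ric h μ ν x =
        -(1 / 2) * (∑ l, ∑ δ, ginv h x l δ *
            pd l (fun y => pd δ (fun z => h z μ ν) y) x)
          + (1 / 2) * pd μ (Γone h ν) x + (1 / 2) * pd ν (Γone h μ) x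
          + (1 / 2) * Fmat h μ ν x := by
  intro x hx μ ν
  have hxU : U ∈ nhds x := hU.mem_nhds hx
  have hhx : ContDiffAt ℝ 2 h x := (hC2 x hx).contDiffAt hxU
  have hcomp : ∀ a b, ContDiffAt ℝ 2 (fun y => h y a b) x := by
    intro a b
    exact (ContinuousLinearMap.proj (R := ℝ) (φ := fun _ : Fin (n+1) => ℝ)
        b).contDiff.comp_contDiffAt x
      ((ContinuousLinearMap.proj (R := ℝ)
        (φ := fun _ : Fin (n+1) => Fin (n+1) → ℝ) a).contDiff.comp_contDiffAt x hhx)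
  have hd1 : ∀ a b, DifferentiableAt ℝ (fun y => h y a b) x := fun a b =>
    (hcomp a b).differentiableAt two_ne_zero
  have hd2 : ∀ c a b, DifferentiableAt ℝ (fun y => pd c (fun z => h z a b) y) x :=
    fun c a b => pd_diff c (hcomp a b)
  have hGd : ∀ a b, DifferentiableAt ℝ (fun y => ginv h y a b) x :=
    ginv_diff hd1 (hinv x hx)
  have hGs : ∀ a b, ginv h x a b = ginv h x b a := ginv_symm (hsymm x hx)
  have hΓLd : ∀ b c d, DifferentiableAt ℝ (ΓL h b c d) x := fun b c d =>
    ((hd2 b d c).add (hd2 c b d)).sub (hd2 d b c)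
  -- Schwarz symmetry
  have hSch : ∀ a b c d : Fin (n+1),
      pd a (fun y => pd b (fun z => h z c d) y) x
        = pd b (fun y => pd a (fun z => h z c d) y) x :=
    fun a b c d => pd_comm a b (hcomp c d)
  -- symmetry of h in the component indices, after two derivatives
  have hH1symU : ∀ y ∈ U, ∀ (b c d : Fin (n+1)),
      pd b (fun z => h z c d) y = pd b (fun z => h z d c) y := by
    intro y hy b c d
    apply pd_congr_nhds
    filter_upwards [hU.mem_nhds hy] with z hz using hsymm z hz c d
  have hH2c : ∀ a b c d : Fin (n+1),
      pd a (fun y => pd b (fun z => h z c d) y) x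
        = pd a (fun y => pd b (fun z => h z d c) y) x := by
    intro a b c d
    apply pd_congr_nhds
    filter_upwards [hxU] with y hy using hH1symU y hy b c d
  -- expansion of first derivatives of ΓL
  have hpdΓL : ∀ a b c d : Fin (n+1),
      pd a (ΓL h b c d) x
        = pd a (fun y => pd b (fun z => h z d c) y) x
            + pd a (fun y => pd c (fun z => h z b d) y) x
            - pd a (fun y => pd d (fun z => h z b c) y) x := by
    intro a b c d
    have e : ΓL h b c d = fun y =>
        (pd b (fun z => h z d c) y + pd c (fun z => h z b d) y)
          - pd d (fun z => h z b c) y := rfl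
    rw [e, pd_sub' a ((hd2 b d c).fun_add (hd2 c b d)) (hd2 d b c),
      pd_add' a (hd2 b d c) (hd2 c b d)]
  -- expansion of first derivatives of ΓU
  have hpdΓU : ∀ a l b c : Fin (n+1),
      pd a (ΓU h l b c) x
        = (1 / 2) * ∑ δ, (pd a (fun y => ginv h y l δ) x * ΓL h b c δ x
            + ginv h x l δ * pd a (ΓL h b c δ) x) := by
    intro a l b c
    calc pd a (ΓU h l b c) x
        = pd a (fun y => (1 / 2) * ∑ δ, ginv h y l δ * ΓL h b c δ y) x := rfl
      _ = (1 / 2) * pd a (fun y => ∑ δ, ginv h y l δ * ΓL h b c δ y) x :=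
        pd_const_mul' a _ (DifferentiableAt.fun_sum fun δ _ => (hGd l δ).fun_mul (hΓLd b c δ))
      _ = (1 / 2) * ∑ δ, pd a (fun y => ginv h y l δ * ΓL h b c δ y) x := by
        rw [pd_sum' Finset.univ a (fun δ _ => (hGd l δ).fun_mul (hΓLd b c δ))]
      _ = (1 / 2) * ∑ δ, (pd a (fun y => ginv h y l δ) x * ΓL h b c δ x
            + ginv h x l δ * pd a (ΓL h b c δ) x) := by
        congr 1
        exact Finset.sum_congr rfl fun δ _ => pd_mul' a (hGd l δ) (hΓLd b c δ)
  have hA : (∑ l, pd l (ΓU h l μ ν) x)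
      = (1 / 2) * (∑ l, ∑ δ, pd l (fun y => ginv h y l δ) x * ΓL h μ ν δ x)
        + (1 / 2) * (∑ l, ∑ δ, ginv h x l δ * pd l (ΓL h μ ν δ) x) := by
    calc (∑ l, pd l (ΓU h l μ ν) x)
        = ∑ l, (1 / 2) * ∑ δ, (pd l (fun y => ginv h y l δ) x * ΓL h μ ν δ x
            + ginv h x l δ * pd l (ΓL h μ ν δ) x) :=
          Finset.sum_congr rfl fun l _ => hpdΓU l l μ ν
      _ = _ := split_sum _
  have hB : (∑ l, pd μ (ΓU h l l ν) x)
      = (1 / 2) * (∑ l, ∑ δ, pd μ (fun y => ginv h y l δ) x * ΓL h l ν δ x)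
        + (1 / 2) * (∑ l, ∑ δ, ginv h x l δ * pd μ (ΓL h l ν δ) x) := by
    calc (∑ l, pd μ (ΓU h l l ν) x)
        = ∑ l, (1 / 2) * ∑ δ, (pd μ (fun y => ginv h y l δ) x * ΓL h l ν δ x
            + ginv h x l δ * pd μ (ΓL h l ν δ) x) :=
          Finset.sum_congr rfl fun l _ => hpdΓU μ l l ν
      _ = _ := split_sum _
  -- expansion of first derivatives of Γone
  have hpdΓone : ∀ a c : Fin (n+1),
      pd a (Γone h c) x
        = (∑ l, ∑ δ, pd a (fun y => ginv h y l δ) x *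
            (pd l (fun y => h y c δ) x - 1 / 2 * pd c (fun y => h y l δ) x))
          + ∑ l, ∑ δ, ginv h x l δ *
            (pd a (fun y => pd l (fun z => h z c δ) y) x
              - 1 / 2 * pd a (fun y => pd c (fun z => h z l δ) y) x) := by
    intro a c
    have hSd : ∀ α β : Fin (n+1), DifferentiableAt ℝ
        (fun y => pd α (fun z => h z c β) y - 1 / 2 * pd c (fun z => h z α β) y) x :=
      fun α β => (hd2 α c β).sub ((hd2 c α β).const_mul _)
    calc pd a (Γone h c) x
        = pd a (fun y => ∑ α, ∑ β, ginv h y α β *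
            (pd α (fun z => h z c β) y - 1 / 2 * pd c (fun z => h z α β) y)) x := rfl
      _ = ∑ α, pd a (fun y => ∑ β, ginv h y α β *
            (pd α (fun z => h z c β) y - 1 / 2 * pd c (fun z => h z α β) y)) x :=
          pd_sum' Finset.univ a (fun α _ =>
            DifferentiableAt.fun_sum fun β _ => (hGd α β).fun_mul (hSd α β))
      _ = ∑ α, ∑ β, pd a (fun y => ginv h y α β *
            (pd α (fun z => h z c β) y - 1 / 2 * pd c (fun z => h z α β) y)) x :=
          Finset.sum_congr rfl fun α _ =>
            pd_sum' Finset.univ a (fun β _ => (hGd α β).mul (hSd α β))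
      _ = ∑ α, ∑ β, (pd a (fun y => ginv h y α β) x *
            (pd α (fun y => h y c β) x - 1 / 2 * pd c (fun y => h y α β) x)
            + ginv h x α β *
              (pd a (fun y => pd α (fun z => h z c β) y) x
                - 1 / 2 * pd a (fun y => pd c (fun z => h z α β) y) x)) := by
          refine Finset.sum_congr rfl fun α _ => Finset.sum_congr rfl fun β _ => ?_
          rw [pd_mul' a (hGd α β) (hSd α β),
            pd_sub' a (hd2 α c β) ((hd2 c α β).const_mul _),
            pd_const_mul' a _ (hd2 c α β)]
      _ = _ := by simp only [Finset.sum_add_distrib]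
  -- the key cancellation identity
  have hTT : (∑ l, ∑ δ, ginv h x l δ * pd l (ΓL h μ ν δ) x)
      - (∑ l, ∑ δ, ginv h x l δ * pd μ (ΓL h l ν δ) x)
      + (∑ l, ∑ δ, ginv h x l δ * pd l (fun y => pd δ (fun z => h z μ ν) y) x)
      - (∑ l, ∑ δ, ginv h x l δ *
          (pd μ (fun y => pd l (fun z => h z ν δ) y) x
            - 1 / 2 * pd μ (fun y => pd ν (fun z => h z l δ) y) x))
      - (∑ l, ∑ δ, ginv h x l δ *
          (pd ν (fun y => pd l (fun z => h z μ δ) y) x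
            - 1 / 2 * pd ν (fun y => pd μ (fun z => h z l δ) y) x)) = 0 := by
    have key : ∀ l δ : Fin (n+1),
        ginv h x l δ * pd l (ΓL h μ ν δ) x
          - ginv h x l δ * pd μ (ΓL h l ν δ) x
          + ginv h x l δ * pd l (fun y => pd δ (fun z => h z μ ν) y) x
          - ginv h x l δ *
              (pd μ (fun y => pd l (fun z => h z ν δ) y) x
                - 1 / 2 * pd μ (fun y => pd ν (fun z => h z l δ) y) x)
          - ginv h x l δ *
              (pd ν (fun y => pd l (fun z => h z μ δ) y) x
                - 1 / 2 * pd ν (fun y => pd μ (fun z => h z l δ) y) x)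
        = ginv h x l δ * pd μ (fun y => pd δ (fun z => h z l ν) y) x
          - ginv h x l δ * pd μ (fun y => pd l (fun z => h z ν δ) y) x := by
      intro l δ
      rw [hpdΓL l μ ν δ, hpdΓL μ l ν δ]
      linear_combination (ginv h x l δ) * hSch l μ δ ν + (ginv h x l δ) * hSch l ν μ δ
        + (ginv h x l δ / 2) * hSch ν μ l δ
    calc (∑ l, ∑ δ, ginv h x l δ * pd l (ΓL h μ ν δ) x)
        - (∑ l, ∑ δ, ginv h x l δ * pd μ (ΓL h l ν δ) x)
        + (∑ l, ∑ δ, ginv h x l δ * pd l (fun y => pd δ (fun z => h z μ ν) y) x)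
        - (∑ l, ∑ δ, ginv h x l δ *
            (pd μ (fun y => pd l (fun z => h z ν δ) y) x
              - 1 / 2 * pd μ (fun y => pd ν (fun z => h z l δ) y) x))
        - (∑ l, ∑ δ, ginv h x l δ *
            (pd ν (fun y => pd l (fun z => h z μ δ) y) x
              - 1 / 2 * pd ν (fun y => pd μ (fun z => h z l δ) y) x))
        = ∑ l, ∑ δ, (ginv h x l δ * pd μ (fun y => pd δ (fun z => h z l ν) y) x
            - ginv h x l δ * pd μ (fun y => pd l (fun z => h z ν δ) y) x) := by
          simp only [← Finset.sum_sub_distrib, ← Finset.sum_add_distrib]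
          exact Finset.sum_congr rfl fun l _ => Finset.sum_congr rfl fun δ _ => key l δ
      _ = (∑ l, ∑ δ, ginv h x l δ * pd μ (fun y => pd δ (fun z => h z l ν) y) x)
          - ∑ l, ∑ δ, ginv h x l δ * pd μ (fun y => pd l (fun z => h z ν δ) y) x := by
          simp only [Finset.sum_sub_distrib]
      _ = 0 := by
          rw [sub_eq_zero]
          conv_lhs => rw [Finset.sum_comm]
          exact Finset.sum_congr rfl fun l _ => Finset.sum_congr rfl fun δ _ => by
            rw [hGs δ l, hH2c μ l δ ν]
  simp only [Ric, Fmat, Emat, Dmat]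
  rw [hA, hB, hpdΓone μ ν, hpdΓone ν μ]
  linear_combination (1 / 2) * hTT
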